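/- Let f: {1,...,n} → {1,...,n} be a 2-max function (every value has at most 2 preimages) with A elements in collision pairs. Then |D[f] - D(n)| ≤ (A/2)·(n-2)!, where D(n) is the number of derangements of {1,...,n}. -/

import Mathlib

set_option maxHeartbeats 1000000

open Finset Equiv

lemma derangements_filter_card (n : ℕ) :
    (Finset.univ.filter fun g : Equiv.Perm (Fin n) => ∀ i, g i ≠ i).card = numDerangements n := by
  classical
  rw [← card_derangements_fin_eq_numDerangements, ← Fintype.card_subtype]
  exact Fintype.card_congr (Equiv.subtypeEquivRight (fun x => Iff.rfl))

lemma card_prescribed (n : ℕ) (i j a b : Fin n) (hij : i ≠ j) (hab : a ≠ b) :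
    (Finset.univ.filter fun g : Equiv.Perm (Fin n) => g i = a ∧ g j = b).card
      ≤ Nat.factorial (n - 2) := by
  classical
  have hcard1 : Fintype.card {k : Fin n // k ≠ i ∧ k ≠ j} = n - 2 := by
    rw [Fintype.card_subtype]
    have h : (Finset.univ.filter fun k : Fin n => k ≠ i ∧ k ≠ j)
        = ({i, j} : Finset (Fin n))ᶜ := by
      ext k; simp [not_or]
    rw [h, Finset.card_compl, Finset.card_pair hij, Fintype.card_fin]
  have hcard2 : Fintype.card {v : Fin n // v ≠ a ∧ v ≠ b} = n - 2 := by
    rw [Fintype.card_subtype]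
    have h : (Finset.univ.filter fun v : Fin n => v ≠ a ∧ v ≠ b)
        = ({a, b} : Finset (Fin n))ᶜ := by
      ext k; simp [not_or]
    rw [h, Finset.card_compl, Finset.card_pair hab, Fintype.card_fin]
  have hsub : (Finset.univ.filter fun g : Equiv.Perm (Fin n) => g i = a ∧ g j = b).card
      = Fintype.card {g : Equiv.Perm (Fin n) // g i = a ∧ g j = b} := by
    rw [Fintype.card_subtype]
  rw [hsub]
  let F : {g : Equiv.Perm (Fin n) // g i = a ∧ g j = b} →
      ({k : Fin n // k ≠ i ∧ k ≠ j} ↪ {v : Fin n // v ≠ a ∧ v ≠ b}) := fun g =>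
    ⟨fun k => ⟨g.1 k.1,
        fun h => k.2.1 (g.1.injective (h.trans g.2.1.symm)),
        fun h => k.2.2 (g.1.injective (h.trans g.2.2.symm))⟩,
      fun k l h => Subtype.ext (g.1.injective (congrArg Subtype.val h))⟩
  have hF : Function.Injective F := by
    intro g g' h
    apply Subtype.ext; apply Equiv.ext; intro k
    by_cases hk : k = i
    · rw [hk, g.2.1, g'.2.1]
    by_cases hk2 : k = j
    · rw [hk2, g.2.2, g'.2.2]
    · have := congrArg (fun e => (e ⟨k, hk, hk2⟩).1) h
      exact this
  calc Fintype.card {g : Equiv.Perm (Fin n) // g i = a ∧ g j = b}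
      ≤ Fintype.card ({k : Fin n // k ≠ i ∧ k ≠ j} ↪ {v : Fin n // v ≠ a ∧ v ≠ b}) :=
        Fintype.card_le_of_injective F hF
    _ = (n - 2).descFactorial (n - 2) := by
        rw [Fintype.card_embedding_eq, hcard1, hcard2]
    _ = Nat.factorial (n - 2) := Nat.descFactorial_self _

lemma card_avoid_perm (n : ℕ) (σ : Equiv.Perm (Fin n)) :
    (Finset.univ.filter fun g : Equiv.Perm (Fin n) => ∀ i, g i ≠ σ i).card
      = (Finset.univ.filter fun g : Equiv.Perm (Fin n) => ∀ i, g i ≠ i).card := by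
  classical
  apply Finset.card_nbij' (fun g : Equiv.Perm (Fin n) => σ⁻¹ * g) (fun g : Equiv.Perm (Fin n) => σ * g)
  · intro g hg
    simp only [Finset.mem_coe, mem_filter, mem_univ, true_and] at hg ⊢
    intro k h
    exact hg k (by simpa using congrArg (fun x => σ x) h)
  · intro g hg
    simp only [Finset.mem_coe, mem_filter, mem_univ, true_and] at hg ⊢
    intro k h
    exact hg k (by simpa using congrArg (fun x => σ⁻¹ x) h)
  · intro g _; group
  · intro g _; group

lemma main_lemma (n : ℕ) (A : ℕ) : ∀ f : Fin n → Fin n,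
    (∀ y : Fin n, (Finset.univ.filter fun i => f i = y).card ≤ 2) →
    A = (Finset.univ.filter fun i : Fin n => ∃ j, j ≠ i ∧ f j = f i).card →
    |((Finset.univ.filter fun g : Equiv.Perm (Fin n) => ∀ i, g i ≠ f i).card : ℤ)
        - (numDerangements n : ℤ)|
      ≤ (A / 2) * Nat.factorial (n - 2) := by
  induction A using Nat.strong_induction_on with
  | _ A ih =>
  intro f h2max hA
  classical
  by_cases hcoll : (Finset.univ.filter fun i : Fin n => ∃ j, j ≠ i ∧ f j = f i) = ∅
  · -- f is injective
    have hinj : Function.Injective f := by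
      intro u v huv
      by_contra hne
      have hmem : u ∈ (Finset.univ.filter fun i : Fin n => ∃ j, j ≠ i ∧ f j = f i) := by
        simp only [mem_filter, mem_univ, true_and]
        exact ⟨v, fun h => hne (h ▸ rfl), huv.symm⟩
      rw [hcoll] at hmem
      exact absurd hmem (Finset.notMem_empty u)
    have hbij : Function.Bijective f := Finite.injective_iff_bijective.mp hinj
    set σ : Equiv.Perm (Fin n) := Equiv.ofBijective f hbij with hσ
    have hfσ : ∀ k, f k = σ k := fun k => rfl
    have hEq : (Finset.univ.filter fun g : Equiv.Perm (Fin n) => ∀ i, g i ≠ f i).card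
        = numDerangements n := by
      rw [← derangements_filter_card n, ← card_avoid_perm n σ]
      apply congrArg
      apply Finset.filter_congr
      intro g _
      have hc : ⇑σ = f := rfl
      rw [hc]
    rw [hEq]
    simp only [sub_self, abs_zero]
    positivity
  · -- there is a collision
    obtain ⟨i, hi⟩ := Finset.nonempty_iff_ne_empty.mpr hcoll
    simp only [mem_filter, mem_univ, true_and] at hi
    obtain ⟨j, hji, hfj⟩ := hi
    -- find an unhit value y
    have hnsurj : ¬ Function.Surjective f := by
      intro hs
      exact hji ((Finite.injective_iff_surjective.mpr hs) hfj)
    rw [Function.Surjective] at hnsurj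
    push_neg at hnsurj
    obtain ⟨y, hy⟩ := hnsurj
    set a : Fin n := f i with ha
    have hay : a ≠ y := hy i
    -- the fiber of a is {i, j}
    have hfiber : ∀ k, f k = a → k = i ∨ k = j := by
      intro k hk
      by_contra hcon
      push_neg at hcon
      have hsub : ({k, i, j} : Finset (Fin n)) ⊆ Finset.univ.filter fun l => f l = a := by
        intro l hl
        simp only [Finset.mem_insert, Finset.mem_singleton] at hl
        simp only [mem_filter, mem_univ, true_and]
        rcases hl with h|h|h
        · rw [h]; exact hk
        · rw [h]
        · rw [h]; exact hfj
      have h3 : ({k, i, j} : Finset (Fin n)).card = 3 := by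
        rw [Finset.card_insert_of_notMem (by simp [hcon.1, hcon.2]),
          Finset.card_pair (Ne.symm hji)]
      have := Finset.card_le_card hsub
      rw [h3] at this
      exact absurd (this.trans (h2max a)) (by norm_num)
    set f' : Fin n → Fin n := Function.update f i y with hf'
    have hf'i : f' i = y := Function.update_self i y f
    have hf'ne : ∀ k, k ≠ i → f' k = f k := fun k hk => Function.update_of_ne hk y f
    -- f' is 2-max
    have h2max' : ∀ v : Fin n, (Finset.univ.filter fun k => f' k = v).card ≤ 2 := by
      intro v
      by_cases hv : v = y
      · have hsub : (Finset.univ.filter fun k => f' k = v) ⊆ {i} := by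
          intro k hk
          simp only [mem_filter, mem_univ, true_and] at hk
          simp only [Finset.mem_singleton]
          by_contra hki
          exact hy k (((hf'ne k hki).symm.trans hk).trans hv)
        exact (Finset.card_le_card hsub).trans (by simp)
      · have hsub : (Finset.univ.filter fun k => f' k = v)
            ⊆ Finset.univ.filter fun k => f k = v := by
          intro k hk
          simp only [mem_filter, mem_univ, true_and] at hk ⊢
          by_cases hki : k = i
          · subst hki; rw [hf'i] at hk; exact absurd hk.symm hv
          · rwa [hf'ne k hki] at hk
        exact (Finset.card_le_card hsub).trans (h2max v)
    -- collision set of f' is contained in coll f minus {i, j}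
    set A' : ℕ := (Finset.univ.filter fun k : Fin n => ∃ l, l ≠ k ∧ f' l = f' k).card with hA'
    have hij' : i ≠ j := Ne.symm hji
    have hsubcoll : (Finset.univ.filter fun k : Fin n => ∃ l, l ≠ k ∧ f' l = f' k)
        ⊆ (Finset.univ.filter fun k : Fin n => ∃ l, l ≠ k ∧ f l = f k) \ {i, j} := by
      intro k hk
      simp only [mem_filter, mem_univ, true_and] at hk
      obtain ⟨l, hlk, hfl⟩ := hk
      have hki : k ≠ i := by
        intro h; subst h
        rw [hf'i] at hfl
        exact hy l ((hf'ne l hlk).symm.trans hfl)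
      have hli : l ≠ i := by
        intro h; subst h
        rw [hf'i, hf'ne k hki] at hfl
        exact hy k hfl.symm
      rw [hf'ne l hli, hf'ne k hki] at hfl
      have hkj : k ≠ j := by
        intro h; subst h
        have : f l = a := hfl.trans hfj
        rcases hfiber l this with h'|h'
        · exact hli h'
        · exact hlk h'
      simp only [Finset.mem_sdiff, mem_filter, mem_univ, true_and, Finset.mem_insert,
        Finset.mem_singleton, not_or]
      exact ⟨⟨l, hlk, hfl⟩, hki, hkj⟩
    have hijmem : ({i, j} : Finset (Fin n))
        ⊆ Finset.univ.filter fun k : Fin n => ∃ l, l ≠ k ∧ f l = f k := by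
      intro k hk
      simp only [Finset.mem_insert, Finset.mem_singleton] at hk
      simp only [mem_filter, mem_univ, true_and]
      rcases hk with h|h <;> subst h
      · exact ⟨j, hji, hfj⟩
      · exact ⟨i, hij', hfj.symm⟩
    have hA2 : A' + 2 ≤ A := by
      have h1 : A' ≤ A - 2 := by
        rw [hA, hA']
        calc (Finset.univ.filter fun k : Fin n => ∃ l, l ≠ k ∧ f' l = f' k).card
            ≤ ((Finset.univ.filter fun k : Fin n => ∃ l, l ≠ k ∧ f l = f k) \ {i, j}).card :=
              Finset.card_le_card hsubcoll
          _ = _ := by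
              rw [Finset.card_sdiff_of_subset hijmem, Finset.card_pair hij']
      have h2 : 2 ≤ A := by
        rw [hA]
        calc 2 = ({i, j} : Finset (Fin n)).card := (Finset.card_pair hij').symm
          _ ≤ _ := Finset.card_le_card hijmem
      omega
    -- the swap permutation and the key finsets
    set swp : Equiv.Perm (Fin n) := Equiv.swap a y with hswp
    have hswap_a : swp a = y := Equiv.swap_apply_left a y
    have hswap_y : swp y = a := Equiv.swap_apply_right a y
    set S : Finset (Equiv.Perm (Fin n)) :=
      Finset.univ.filter fun g => ∀ k, k ≠ i → g k ≠ f k with hS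
    set T1 : Finset (Equiv.Perm (Fin n)) := S.filter fun g => g i = y with hT1
    set T2 : Finset (Equiv.Perm (Fin n)) := S.filter fun g => g i = a with hT2
    have e1 : (Finset.univ.filter fun g : Equiv.Perm (Fin n) => ∀ k, g k ≠ f k)
        = S.filter fun g => ¬ g i = a := by
      rw [hS, Finset.filter_filter]
      apply Finset.filter_congr
      intro g _
      constructor
      · intro h; exact ⟨fun k _ => h k, fun hh => (h i) (ha ▸ hh)⟩
      · rintro ⟨h1, h2⟩ k
        by_cases hk : k = i
        · rw [hk, ← ha]; exact h2
        · exact h1 k hk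
    have e2 : (Finset.univ.filter fun g : Equiv.Perm (Fin n) => ∀ k, g k ≠ f' k)
        = S.filter fun g => ¬ g i = y := by
      rw [hS, Finset.filter_filter]
      apply Finset.filter_congr
      intro g _
      constructor
      · intro h
        refine ⟨fun k hk => ?_, ?_⟩
        · have hh := h k; rwa [hf'ne k hk] at hh
        · have hh := h i; rwa [hf'i] at hh
      · rintro ⟨h1, h2⟩ k
        by_cases hk : k = i
        · rw [hk, hf'i]; exact h2
        · rw [hf'ne k hk]; exact h1 k hk
    have hc1 : T2.card + (Finset.univ.filter fun g : Equiv.Perm (Fin n) => ∀ k, g k ≠ f k).card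
        = S.card := by
      rw [e1, hT2]
      exact Finset.card_filter_add_card_filter_not (p := fun g : Equiv.Perm (Fin n) => g i = a)
    have hc2 : T1.card + (Finset.univ.filter fun g : Equiv.Perm (Fin n) => ∀ k, g k ≠ f' k).card
        = S.card := by
      rw [e2, hT1]
      exact Finset.card_filter_add_card_filter_not (p := fun g : Equiv.Perm (Fin n) => g i = y)
    -- T1.card ≤ T2.card
    have hT12 : T1.card ≤ T2.card := by
      apply Finset.card_le_card_of_injOn (fun g => swp * g)
      · intro g hg
        simp only [Finset.mem_coe, hT1, hT2, hS, Finset.mem_filter, Finset.mem_univ, true_and,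
          Equiv.Perm.mul_apply] at hg ⊢
        obtain ⟨h1, h2⟩ := hg
        refine ⟨fun k hk => ?_, by rw [h2, hswap_y]⟩
        rcases eq_or_ne (g k) a with h | h
        · rw [h, hswap_a]; exact fun hh => hy k hh.symm
        rcases eq_or_ne (g k) y with h' | h'
        · exact absurd (g.injective (h'.trans h2.symm)) hk
        · rw [Equiv.swap_apply_of_ne_of_ne h h']; exact h1 k hk
      · exact (mul_right_injective swp).injOn
    -- T2.card ≤ (n-2)! + T1.card
    have hT21 : T2.card ≤ Nat.factorial (n - 2) + T1.card := by
      have hsplitT2 : ((T2.filter fun g => g j = y).card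
          + (T2.filter fun g => ¬ g j = y).card) = T2.card :=
        Finset.card_filter_add_card_filter_not (p := fun g : Equiv.Perm (Fin n) => g j = y)
      have hb1 : (T2.filter fun g => g j = y).card ≤ Nat.factorial (n - 2) := by
        refine le_trans (Finset.card_le_card ?_) (card_prescribed n i j a y hij' hay)
        intro g hg
        simp only [hT2, hS, Finset.mem_filter, Finset.mem_univ, true_and] at hg ⊢
        exact ⟨hg.1.2, hg.2⟩
      have hb2 : (T2.filter fun g => ¬ g j = y).card ≤ T1.card := by
        apply Finset.card_le_card_of_injOn (fun g => swp * g)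
        · intro g hg
          simp only [Finset.mem_coe, hT1, hT2, hS, Finset.mem_filter, Finset.mem_univ, true_and,
            Equiv.Perm.mul_apply] at hg ⊢
          obtain ⟨⟨h1, h2⟩, h3⟩ := hg
          refine ⟨fun k hk => ?_, by rw [h2, hswap_a]⟩
          rcases eq_or_ne (g k) a with h | h
          · exact absurd (g.injective (h.trans h2.symm)) hk
          rcases eq_or_ne (g k) y with h' | h'
          · rw [h', hswap_y]
            intro hh
            rcases hfiber k hh.symm with hcase | hcase
            · exact hk hcase
            · exact h3 (hcase ▸ h')
          · rw [Equiv.swap_apply_of_ne_of_ne h h']; exact h1 k hk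
        · exact (mul_right_injective swp).injOn
      omega
    -- conclude
    have ihA' := ih A' (by omega) f' h2max' hA'
    have hfact0 : (0 : ℤ) ≤ (Nat.factorial (n - 2) : ℤ) := by positivity
    have hdiv : ((A' : ℤ) / 2 + 1) ≤ (A : ℤ) / 2 := by omega
    have habs : |((Finset.univ.filter fun g : Equiv.Perm (Fin n) => ∀ k, g k ≠ f k).card : ℤ)
        - ((Finset.univ.filter fun g : Equiv.Perm (Fin n) => ∀ k, g k ≠ f' k).card : ℤ)|
        ≤ (Nat.factorial (n - 2) : ℤ) := by
      rw [abs_le]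
      constructor <;> omega
    calc |((Finset.univ.filter fun g : Equiv.Perm (Fin n) => ∀ k, g k ≠ f k).card : ℤ)
        - (numDerangements n : ℤ)|
        ≤ |((Finset.univ.filter fun g : Equiv.Perm (Fin n) => ∀ k, g k ≠ f k).card : ℤ)
            - ((Finset.univ.filter fun g : Equiv.Perm (Fin n) => ∀ k, g k ≠ f' k).card : ℤ)|
          + |((Finset.univ.filter fun g : Equiv.Perm (Fin n) => ∀ k, g k ≠ f' k).card : ℤ)
            - (numDerangements n : ℤ)| := abs_sub_le _ _ _
      _ ≤ (Nat.factorial (n - 2) : ℤ) + (A' : ℤ) / 2 * (Nat.factorial (n - 2) : ℤ) :=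
          add_le_add habs ihA'
      _ = ((A' : ℤ) / 2 + 1) * (Nat.factorial (n - 2) : ℤ) := by ring
      _ ≤ (A : ℤ) / 2 * (Nat.factorial (n - 2) : ℤ) :=
          mul_le_mul_of_nonneg_right hdiv hfact0

/-- For a 2-max function f on {1,...,n} with A elements in collision pairs,
|D[f] - D(n)| ≤ (A/2)·(n-2)!, where D(n) is the derangement number. -/
theorem stmt_14 (n : ℕ) (f : Fin n → Fin n)
    (h2max : ∀ y : Fin n, (Finset.univ.filter fun i => f i = y).card ≤ 2)
    (A : ℕ)
    (hA : A = (Finset.univ.filter fun i : Fin n => ∃ j, j ≠ i ∧ f j = f i).card) :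
    |((Finset.univ.filter fun g : Equiv.Perm (Fin n) => ∀ i, g i ≠ f i).card : ℤ)
        - (numDerangements n : ℤ)|
      ≤ (A / 2) * Nat.factorial (n - 2) := by
  exact main_lemma n A f h2max hA
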